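/- arXiv:1910.14118 — 7 statements merged into one kernel-verified Lean document; each statement's English description precedes it below -/
import Mathlib

section
/- Let (μ₁, μ₂, μ₃) and (μ₁', μ₂', μ₃') be admissible triples of real numbers. If A = A', B = B', C = C' and D = D' (where A, B, C, D are formed from (μ₁, μ₂, μ₃) and A', B', C', D' from (μ₁', μ₂', μ₃')), then the multisets {μ₁, μ₂, μ₃} and {μ₁', μ₂', μ₃'} are equal. (This is the algebraic core of the theorem that two locally homogeneous elliptic three-manifolds whose fundamental groups have the same order and whose first four heat invariants agree are locally isometric.) -/
/-- Elementary symmetric polynomials in three real variables. -/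
noncomputable def P1 (x y z : ℝ) : ℝ := x + y + z
noncomputable def P2 (x y z : ℝ) : ℝ := x * y + x * z + y * z
noncomputable def P3 (x y z : ℝ) : ℝ := x * y * z

/-- The quantities A, B, C, D determined by the order of the fundamental group
and the first four heat invariants. -/
noncomputable def qA (x y z : ℝ) : ℝ := P2 x y z
noncomputable def qB (x y z : ℝ) : ℝ := P1 x y z * P2 x y z - P3 x y z
noncomputable def qC (x y z : ℝ) : ℝ := P1 x y z * P3 x y z
noncomputable def qD (x y z : ℝ) : ℝ :=
  -240 * (P3 x y z) ^ 2 - 576 * P1 x y z * P2 x y z * P3 x y z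
    + 184 * (P2 x y z) ^ 3 + 192 * (P1 x y z) ^ 3 * P3 x y z
    - 48 * (P1 x y z) ^ 2 * (P2 x y z) ^ 2

/-- two reals with equal elementary symmetric functions give equal pairs. -/
lemma pair_eq_aux (a b d e : ℝ) (h1 : a + b = d + e) (h2 : a * b = d * e) :
    ({a, b} : Multiset ℝ) = {d, e} := by
  have h : (d - a) * (d - b) = 0 := by linear_combination (-d) * h1 + h2
  rcases mul_eq_zero.mp h with h' | h'
  · have ha : d = a := by linarith
    subst ha
    have hb : e = b := by linarith
    subst hb
    rfl
  · have hb : d = b := by linarith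
    subst hb
    have ha : e = a := by linarith
    subst ha
    exact Multiset.cons_swap _ _ _

/-- three reals with equal elementary symmetric functions give equal multisets. -/
lemma triple_eq_aux (a b c d e f : ℝ) (h1 : a + b + c = d + e + f)
    (h2 : a * b + a * c + b * c = d * e + d * f + e * f)
    (h3 : a * b * c = d * e * f) :
    ({a, b, c} : Multiset ℝ) = {d, e, f} := by
  have h : (d - a) * (d - b) * (d - c) = 0 := by
    linear_combination (-(d ^ 2)) * h1 + d * h2 - h3
  rcases mul_eq_zero.mp h with h' | hc
  · rcases mul_eq_zero.mp h' with ha | hb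
    · have hda : d = a := by linarith
      subst hda
      have h1' : b + c = e + f := by linarith
      have h2' : b * c = e * f := by linear_combination h2 - d * h1'
      have := pair_eq_aux b c e f h1' h2'
      show d ::ₘ ({b, c} : Multiset ℝ) = d ::ₘ ({e, f} : Multiset ℝ)
      rw [this]
    · have hdb : d = b := by linarith
      subst hdb
      have h1' : a + c = e + f := by linarith
      have h2' : a * c = e * f := by linear_combination h2 - d * h1'
      have hp := pair_eq_aux a c e f h1' h2'
      calc (({a, d, c}) : Multiset ℝ) = d ::ₘ a ::ₘ {c} := Multiset.cons_swap _ _ _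
        _ = d ::ₘ ({e, f} : Multiset ℝ) := by rw [show (a ::ₘ {c} : Multiset ℝ) = {a, c} from rfl, hp]
  · have hdc : d = c := by linarith
    subst hdc
    have h1' : a + b = e + f := by linarith
    have h2' : a * b = e * f := by linear_combination h2 - d * h1'
    have hp := pair_eq_aux a b e f h1' h2'
    have step : ({a, b, d} : Multiset ℝ) = d ::ₘ ({a, b} : Multiset ℝ) := by
      show a ::ₘ b ::ₘ d ::ₘ 0 = d ::ₘ a ::ₘ b ::ₘ 0
      rw [Multiset.cons_swap b d, Multiset.cons_swap a d]
    rw [step, hp]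
    rfl

/-- The core algebraic argument in terms of symmetric functions. -/
lemma core_aux (s s' p q q' : ℝ) (hs : 0 < s) (hs' : 0 < s')
    (hBμ : 0 < s * p - q)
    (hB : s * p - q = s' * p - q')
    (hC : s * q = s' * q')
    (hD : -240 * q ^ 2 - 576 * s * p * q + 184 * p ^ 3 + 192 * s ^ 3 * q - 48 * s ^ 2 * p ^ 2
        = -240 * q' ^ 2 - 576 * s' * p * q' + 184 * p ^ 3 + 192 * s' ^ 3 * q' - 48 * s' ^ 2 * p ^ 2)
    (hΔμ : 0 ≤ 18 * s * p * q - 4 * s ^ 3 * q + s ^ 2 * p ^ 2 - 4 * p ^ 3 - 27 * q ^ 2)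
    (hΔν : 0 ≤ 18 * s' * p * q' - 4 * s' ^ 3 * q' + s' ^ 2 * p ^ 2 - 4 * p ^ 3 - 27 * q' ^ 2) :
    s = s' ∧ q = q' := by
  by_cases h : s = s'
  · subst h
    constructor
    · rfl
    · linarith
  · exfalso
    have key1 : (s - s') * (q + s' * p) = 0 := by linear_combination hC + s' * hB
    have key2 : (s' - s) * (q' + s * p) = 0 := by linear_combination (-1 : ℝ) * hC - s * hB
    have hss : s - s' ≠ 0 := sub_ne_zero.mpr h
    have hss' : s' - s ≠ 0 := sub_ne_zero.mpr (Ne.symm h)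
    have hq : q + s' * p = 0 := by
      rcases mul_eq_zero.mp key1 with h' | h'
      · exact absurd h' hss
      · exact h'
    have hq' : q' + s * p = 0 := by
      rcases mul_eq_zero.mp key2 with h' | h'
      · exact absurd h' hss'
      · exact h'
    have keyD : 192 * p * ((s + s') * (s - s')) * (p - s * s') = 0 := by
      linear_combination hD + (240 * (q - s' * p) + 576 * s * p - 192 * s ^ 3) * hq
        - (240 * (q' - s * p) + 576 * s' * p - 192 * s' ^ 3) * hq'
    rcases mul_eq_zero.mp keyD with h' | hps
    · rcases mul_eq_zero.mp h' with h'' | hmid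
      · rcases mul_eq_zero.mp h'' with h3 | hp0
        · norm_num at h3
        · subst hp0
          have hq0 : q = 0 := by
            have : s' * (0 : ℝ) = 0 := by ring
            linarith [hq, this]
          have : s * (0:ℝ) = 0 := by ring
          linarith [hBμ]
      · rcases mul_eq_zero.mp hmid with h4 | h5
        · linarith
        · exact hss h5
    · -- p = s * s'
      have hpe : p = s * s' := by linarith
      subst hpe
      have hqe : q = -(s' * (s * s')) := by linarith
      have hqe' : q' = -(s * (s * s')) := by linarith
      rw [hqe] at hΔμ
      rw [hqe'] at hΔν
      have e1 : 18 * s * (s * s') * -(s' * (s * s')) - 4 * s ^ 3 * -(s' * (s * s'))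
          + s ^ 2 * (s * s') ^ 2 - 4 * (s * s') ^ 3 - 27 * (-(s' * (s * s'))) ^ 2
          = s ^ 2 * s' ^ 2 * (5 * s - 27 * s') * (s + s') := by ring
      have e2 : 18 * s' * (s * s') * -(s * (s * s')) - 4 * s' ^ 3 * -(s * (s * s'))
          + s' ^ 2 * (s * s') ^ 2 - 4 * (s * s') ^ 3 - 27 * (-(s * (s * s'))) ^ 2
          = s ^ 2 * s' ^ 2 * (5 * s' - 27 * s) * (s + s') := by ring
      rw [e1] at hΔμ
      rw [e2] at hΔν
      have hfac : 0 < s ^ 2 * s' ^ 2 * (s + s') := by positivity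
      have g1 : 0 ≤ 5 * s - 27 * s' := by
        by_contra hlt
        push_neg at hlt
        nlinarith [mul_pos hfac (neg_pos.mpr hlt)]
      have g2 : 0 ≤ 5 * s' - 27 * s := by
        by_contra hlt
        push_neg at hlt
        nlinarith [mul_pos hfac (neg_pos.mpr hlt)]
      linarith

/-- admissible triples with the same A, B, C, D determine the same
3-multiset of Christoffel symbols. -/
theorem stmt_0 (μ₁ μ₂ μ₃ ν₁ ν₂ ν₃ : ℝ)
    (h₁ : μ₁ + μ₂ > 0) (h₂ : μ₁ + μ₃ > 0) (h₃ : μ₂ + μ₃ > 0)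
    (h₁' : ν₁ + ν₂ > 0) (h₂' : ν₁ + ν₃ > 0) (h₃' : ν₂ + ν₃ > 0)
    (hA : qA μ₁ μ₂ μ₃ = qA ν₁ ν₂ ν₃)
    (hB : qB μ₁ μ₂ μ₃ = qB ν₁ ν₂ ν₃)
    (hC : qC μ₁ μ₂ μ₃ = qC ν₁ ν₂ ν₃)
    (hD : qD μ₁ μ₂ μ₃ = qD ν₁ ν₂ ν₃) :
    ({μ₁, μ₂, μ₃} : Multiset ℝ) = {ν₁, ν₂, ν₃} := by
  simp only [qA, qB, qC, qD, P1, P2, P3] at hA hB hC hD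
  have hs : 0 < μ₁ + μ₂ + μ₃ := by linarith
  have hs' : 0 < ν₁ + ν₂ + ν₃ := by linarith
  have hBμ : 0 < (μ₁ + μ₂ + μ₃) * (μ₁ * μ₂ + μ₁ * μ₃ + μ₂ * μ₃) - μ₁ * μ₂ * μ₃ := by
    rw [show (μ₁ + μ₂ + μ₃) * (μ₁ * μ₂ + μ₁ * μ₃ + μ₂ * μ₃) - μ₁ * μ₂ * μ₃
        = (μ₁ + μ₂) * (μ₁ + μ₃) * (μ₂ + μ₃) from by ring]
    exact mul_pos (mul_pos h₁ h₂) h₃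
  have hBc : (μ₁ + μ₂ + μ₃) * (μ₁ * μ₂ + μ₁ * μ₃ + μ₂ * μ₃) - μ₁ * μ₂ * μ₃
      = (ν₁ + ν₂ + ν₃) * (μ₁ * μ₂ + μ₁ * μ₃ + μ₂ * μ₃) - ν₁ * ν₂ * ν₃ := by
    linear_combination hB - (ν₁ + ν₂ + ν₃) * hA
  have hDc : -240 * (μ₁ * μ₂ * μ₃) ^ 2
        - 576 * (μ₁ + μ₂ + μ₃) * (μ₁ * μ₂ + μ₁ * μ₃ + μ₂ * μ₃) * (μ₁ * μ₂ * μ₃)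
        + 184 * (μ₁ * μ₂ + μ₁ * μ₃ + μ₂ * μ₃) ^ 3
        + 192 * (μ₁ + μ₂ + μ₃) ^ 3 * (μ₁ * μ₂ * μ₃)
        - 48 * (μ₁ + μ₂ + μ₃) ^ 2 * (μ₁ * μ₂ + μ₁ * μ₃ + μ₂ * μ₃) ^ 2
      = -240 * (ν₁ * ν₂ * ν₃) ^ 2
        - 576 * (ν₁ + ν₂ + ν₃) * (μ₁ * μ₂ + μ₁ * μ₃ + μ₂ * μ₃) * (ν₁ * ν₂ * ν₃)
        + 184 * (μ₁ * μ₂ + μ₁ * μ₃ + μ₂ * μ₃) ^ 3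
        + 192 * (ν₁ + ν₂ + ν₃) ^ 3 * (ν₁ * ν₂ * ν₃)
        - 48 * (ν₁ + ν₂ + ν₃) ^ 2 * (μ₁ * μ₂ + μ₁ * μ₃ + μ₂ * μ₃) ^ 2 := by
    linear_combination hD + (576 * (ν₁ + ν₂ + ν₃) * (ν₁ * ν₂ * ν₃)
      - 184 * ((ν₁ * ν₂ + ν₁ * ν₃ + ν₂ * ν₃) ^ 2
        + (ν₁ * ν₂ + ν₁ * ν₃ + ν₂ * ν₃) * (μ₁ * μ₂ + μ₁ * μ₃ + μ₂ * μ₃)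
        + (μ₁ * μ₂ + μ₁ * μ₃ + μ₂ * μ₃) ^ 2)
      + 48 * (ν₁ + ν₂ + ν₃) ^ 2 * ((ν₁ * ν₂ + ν₁ * ν₃ + ν₂ * ν₃)
        + (μ₁ * μ₂ + μ₁ * μ₃ + μ₂ * μ₃))) * hA
  have hΔμ : 0 ≤ 18 * (μ₁ + μ₂ + μ₃) * (μ₁ * μ₂ + μ₁ * μ₃ + μ₂ * μ₃) * (μ₁ * μ₂ * μ₃)
      - 4 * (μ₁ + μ₂ + μ₃) ^ 3 * (μ₁ * μ₂ * μ₃)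
      + (μ₁ + μ₂ + μ₃) ^ 2 * (μ₁ * μ₂ + μ₁ * μ₃ + μ₂ * μ₃) ^ 2
      - 4 * (μ₁ * μ₂ + μ₁ * μ₃ + μ₂ * μ₃) ^ 3 - 27 * (μ₁ * μ₂ * μ₃) ^ 2 := by
    rw [show 18 * (μ₁ + μ₂ + μ₃) * (μ₁ * μ₂ + μ₁ * μ₃ + μ₂ * μ₃) * (μ₁ * μ₂ * μ₃)
      - 4 * (μ₁ + μ₂ + μ₃) ^ 3 * (μ₁ * μ₂ * μ₃)
      + (μ₁ + μ₂ + μ₃) ^ 2 * (μ₁ * μ₂ + μ₁ * μ₃ + μ₂ * μ₃) ^ 2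
      - 4 * (μ₁ * μ₂ + μ₁ * μ₃ + μ₂ * μ₃) ^ 3 - 27 * (μ₁ * μ₂ * μ₃) ^ 2
      = ((μ₁ - μ₂) * (μ₁ - μ₃) * (μ₂ - μ₃)) ^ 2 from by ring]
    exact sq_nonneg _
  have hΔν : 0 ≤ 18 * (ν₁ + ν₂ + ν₃) * (μ₁ * μ₂ + μ₁ * μ₃ + μ₂ * μ₃) * (ν₁ * ν₂ * ν₃)
      - 4 * (ν₁ + ν₂ + ν₃) ^ 3 * (ν₁ * ν₂ * ν₃)
      + (ν₁ + ν₂ + ν₃) ^ 2 * (μ₁ * μ₂ + μ₁ * μ₃ + μ₂ * μ₃) ^ 2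
      - 4 * (μ₁ * μ₂ + μ₁ * μ₃ + μ₂ * μ₃) ^ 3 - 27 * (ν₁ * ν₂ * ν₃) ^ 2 := by
    rw [hA]
    rw [show 18 * (ν₁ + ν₂ + ν₃) * (ν₁ * ν₂ + ν₁ * ν₃ + ν₂ * ν₃) * (ν₁ * ν₂ * ν₃)
      - 4 * (ν₁ + ν₂ + ν₃) ^ 3 * (ν₁ * ν₂ * ν₃)
      + (ν₁ + ν₂ + ν₃) ^ 2 * (ν₁ * ν₂ + ν₁ * ν₃ + ν₂ * ν₃) ^ 2
      - 4 * (ν₁ * ν₂ + ν₁ * ν₃ + ν₂ * ν₃) ^ 3 - 27 * (ν₁ * ν₂ * ν₃) ^ 2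
      = ((ν₁ - ν₂) * (ν₁ - ν₃) * (ν₂ - ν₃)) ^ 2 from by ring]
    exact sq_nonneg _
  obtain ⟨hse, hqe⟩ := core_aux (μ₁ + μ₂ + μ₃) (ν₁ + ν₂ + ν₃)
    (μ₁ * μ₂ + μ₁ * μ₃ + μ₂ * μ₃) (μ₁ * μ₂ * μ₃) (ν₁ * ν₂ * ν₃)
    hs hs' hBμ hBc hC hDc hΔμ hΔν
  exact triple_eq_aux μ₁ μ₂ μ₃ ν₁ ν₂ ν₃ hse hA hqe
end

section
/- Let (μ₁, μ₂, μ₃) and (μ₁', μ₂', μ₃') be admissible triples of real numbers with A = A', B = B' and C = C'. If additionally A ≤ 0 or C ≥ 0, then the multisets {μ₁, μ₂, μ₃} and {μ₁', μ₂', μ₃'} are equal (i.e., in this case the quantity D is not needed). -/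
/-- For an admissible triple with nonpositive `P₂`, the product `P₁ P₃` is negative. -/
lemma admissible_neg_C (a b c : ℝ) (h₁ : a + b > 0) (h₂ : a + c > 0) (h₃ : b + c > 0)
    (hA : a*b + a*c + b*c ≤ 0) : (a + b + c) * (a * b * c) < 0 := by
  nlinarith [mul_pos h₁ h₂, mul_pos h₁ h₃, mul_pos h₂ h₃, mul_pos (mul_pos h₁ h₂) h₃,
    sq_nonneg (a+b+c), sq_nonneg (a-b), sq_nonneg (a-c), sq_nonneg (b-c),
    sq_nonneg a, sq_nonneg b, sq_nonneg c]

open Polynomial in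
/-- Two real triples with the same elementary symmetric polynomials give
the same multiset. -/
lemma ms_of_esymm (a b c d e f : ℝ) (h1 : a+b+c = d+e+f)
    (h2 : a*b+a*c+b*c = d*e+d*f+e*f) (h3 : a*b*c = d*e*f) :
    ({a,b,c} : Multiset ℝ) = {d,e,f} := by
  have h1' : (C a + C b + C c : ℝ[X]) = C d + C e + C f := by
    rw [← C_add, ← C_add, ← C_add, ← C_add, h1]
  have h2' : (C a * C b + C a * C c + C b * C c : ℝ[X])
      = C d * C e + C d * C f + C e * C f := by
    rw [← C_mul, ← C_mul, ← C_mul, ← C_mul, ← C_mul, ← C_mul, ← C_add, ← C_add,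
      ← C_add, ← C_add, h2]
  have h3' : (C a * C b * C c : ℝ[X]) = C d * C e * C f := by
    rw [← C_mul, ← C_mul, ← C_mul, ← C_mul, h3]
  have key : ((X - C a) * ((X - C b) * ((X - C c) * 1)) : ℝ[X])
      = (X - C d) * ((X - C e) * ((X - C f) * 1)) := by
    linear_combination (-X^2) * h1' + X * h2' - h3'
  have ha := Polynomial.roots_multiset_prod_X_sub_C ({a,b,c} : Multiset ℝ)
  have hb := Polynomial.roots_multiset_prod_X_sub_C ({d,e,f} : Multiset ℝ)
  simp only [Multiset.insert_eq_cons, Multiset.map_cons, Multiset.map_singleton,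
    Multiset.prod_cons, Multiset.prod_singleton] at ha hb
  rw [show ({a,b,c} : Multiset ℝ) = a ::ₘ b ::ₘ {c} from rfl,
    show ({d,e,f} : Multiset ℝ) = d ::ₘ e ::ₘ {f} from rfl, ← ha, ← hb]
  refine congrArg Polynomial.roots ?_
  simpa using key

/-- admissible triples with the same A, B, C, where additionally
A ≤ 0 or C ≥ 0, determine the same 3-multiset of Christoffel symbols. -/
theorem stmt_1 (μ₁ μ₂ μ₃ ν₁ ν₂ ν₃ : ℝ)
    (h₁ : μ₁ + μ₂ > 0) (h₂ : μ₁ + μ₃ > 0) (h₃ : μ₂ + μ₃ > 0)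
    (h₁' : ν₁ + ν₂ > 0) (h₂' : ν₁ + ν₃ > 0) (h₃' : ν₂ + ν₃ > 0)
    (hA : qA μ₁ μ₂ μ₃ = qA ν₁ ν₂ ν₃)
    (hB : qB μ₁ μ₂ μ₃ = qB ν₁ ν₂ ν₃)
    (hC : qC μ₁ μ₂ μ₃ = qC ν₁ ν₂ ν₃)
    (hsign : qA μ₁ μ₂ μ₃ ≤ 0 ∨ qC μ₁ μ₂ μ₃ ≥ 0) :
    ({μ₁, μ₂, μ₃} : Multiset ℝ) = {ν₁, ν₂, ν₃} := by
  simp only [qA, qB, qC, P1, P2, P3] at hA hB hC hsign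
  set s : ℝ := μ₁ + μ₂ + μ₃ with hs_def
  set s' : ℝ := ν₁ + ν₂ + ν₃ with hs'_def
  set A : ℝ := μ₁ * μ₂ + μ₁ * μ₃ + μ₂ * μ₃ with hA_def
  set q : ℝ := μ₁ * μ₂ * μ₃ with hq_def
  set q' : ℝ := ν₁ * ν₂ * ν₃ with hq'_def
  have hs : s > 0 := by rw [hs_def]; linarith
  have hs' : s' > 0 := by rw [hs'_def]; linarith
  have hCneg : A ≤ 0 → s * q < 0 := by
    intro hAle
    rw [hA_def] at hAle
    rw [hs_def, hq_def]
    exact admissible_neg_C μ₁ μ₂ μ₃ h₁ h₂ h₃ hAle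
  clear_value s s' A q q'
  -- rewrite the hypotheses in terms of s, s', A, q, q'
  have hB' : s * A - q = s' * A - q' := by linear_combination hB - s' * hA
  have hC' : s * q = s' * q' := hC
  -- show s = s'
  have hss : s = s' := by
    by_contra hne
    have hfac : (s - s') * (q + A * s') = 0 := by linear_combination hC' + s' * hB'
    have hq'' : q + A * s' = 0 := by
      rcases mul_eq_zero.mp hfac with h | h
      · exact absurd (by linarith : s = s') hne
      · exact h
    have hCval : s * q = -A * s * s' := by
      rw [show q = -A * s' by linarith]; ring
    have hss'pos := mul_pos hs hs'
    rcases hsign with hAle | hCge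
    · have h5 := hCneg hAle
      nlinarith [mul_nonneg (by linarith : (0:ℝ) ≤ -A) hss'pos.le]
    · have hAle : A ≤ 0 := by nlinarith [hss'pos]
      have h5 := hCneg hAle
      nlinarith
  have hqq : q = q' := by
    rw [hss] at hB'; linarith
  rw [hs_def, hs'_def] at hss
  rw [hA_def] at hA
  rw [hq_def, hq'_def] at hqq
  exact ms_of_esymm μ₁ μ₂ μ₃ ν₁ ν₂ ν₃ hss hA hqq
end

section
/- Let (μ₁, μ₂, μ₃) and (μ₁', μ₂', μ₃') be admissible triples of real numbers. If A = A', B = B', C = C' and D = D', then P₁(μ₁, μ₂, μ₃) = P₁(μ₁', μ₂', μ₃'); that is, the quantities A, B, C, D determine P₁. -/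
lemma aux_key (s t a b b' : ℝ) (hs : 0 < s) (ht : 0 < t)
    (hBpos : 0 < s * a - b)
    (hB : s * a - b = t * a - b')
    (hC : s * b = t * b')
    (hD : -240 * b ^ 2 - 576 * s * a * b + 184 * a ^ 3 + 192 * s ^ 3 * b - 48 * s ^ 2 * a ^ 2
        = -240 * b' ^ 2 - 576 * t * a * b' + 184 * a ^ 3 + 192 * t ^ 3 * b' - 48 * t ^ 2 * a ^ 2)
    (hd1 : 0 ≤ s ^ 2 * a ^ 2 - 4 * a ^ 3 - 4 * s ^ 3 * b + 18 * s * a * b - 27 * b ^ 2)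
    (hd2 : 0 ≤ t ^ 2 * a ^ 2 - 4 * a ^ 3 - 4 * t ^ 3 * b' + 18 * t * a * b' - 27 * b' ^ 2) :
    s = t := by
  by_contra hne
  have hst : s - t ≠ 0 := sub_ne_zero.mpr hne
  have key1 : (s - t) * (a * (s + t) - (s * a - b)) = 0 := by
    linear_combination hC + t * hB
  have h5 : a * (s + t) - (s * a - b) = 0 :=
    (mul_eq_zero.mp key1).resolve_left hst
  have hb : b = -(a * t) := by linear_combination h5
  have hb' : b' = -(a * s) := by linear_combination hB + h5
  subst hb
  subst hb'
  have ha : 0 < a := by nlinarith [hBpos, hs, ht]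
  have h7 : (192 * a * (s + t) * (s - t)) * (a - s * t) = 0 := by
    linear_combination hD
  have hmulpos : (0:ℝ) < 192 * a * (s + t) := by positivity
  have hq : a - s * t = 0 :=
    (mul_eq_zero.mp h7).resolve_left (mul_ne_zero hmulpos.ne' hst)
  have ha2 : a = s * t := by linarith
  subst ha2
  have hp : (0:ℝ) < s ^ 2 * t ^ 2 * (s + t) ^ 2 := by positivity
  nlinarith [hd1, hd2, hp]

set_option maxHeartbeats 1000000 in
/-- for admissible triples, the quantities A, B, C, D determine P₁. -/
theorem stmt_2 (μ₁ μ₂ μ₃ ν₁ ν₂ ν₃ : ℝ)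
    (h₁ : μ₁ + μ₂ > 0) (h₂ : μ₁ + μ₃ > 0) (h₃ : μ₂ + μ₃ > 0)
    (h₁' : ν₁ + ν₂ > 0) (h₂' : ν₁ + ν₃ > 0) (h₃' : ν₂ + ν₃ > 0)
    (hA : qA μ₁ μ₂ μ₃ = qA ν₁ ν₂ ν₃)
    (hB : qB μ₁ μ₂ μ₃ = qB ν₁ ν₂ ν₃)
    (hC : qC μ₁ μ₂ μ₃ = qC ν₁ ν₂ ν₃)
    (hD : qD μ₁ μ₂ μ₃ = qD ν₁ ν₂ ν₃) :
    P1 μ₁ μ₂ μ₃ = P1 ν₁ ν₂ ν₃ := by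
  simp only [qA, qB, qC, qD, P1, P2, P3] at hA hB hC hD ⊢
  have hs : 0 < μ₁ + μ₂ + μ₃ := by linarith
  have ht : 0 < ν₁ + ν₂ + ν₃ := by linarith
  refine aux_key (μ₁ + μ₂ + μ₃) (ν₁ + ν₂ + ν₃) (μ₁ * μ₂ + μ₁ * μ₃ + μ₂ * μ₃)
    (μ₁ * μ₂ * μ₃) (ν₁ * ν₂ * ν₃) hs ht ?_ ?_ ?_ ?_ ?_ ?_
  · nlinarith [mul_pos (mul_pos h₁ h₂) h₃]
  · linear_combination hB - (ν₁ + ν₂ + ν₃) * hA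
  · linear_combination hC
  · linear_combination hD - (-576 * (ν₁ + ν₂ + ν₃) * (ν₁ * ν₂ * ν₃)
      + 184 * ((ν₁ * ν₂ + ν₁ * ν₃ + ν₂ * ν₃) ^ 2
        + (ν₁ * ν₂ + ν₁ * ν₃ + ν₂ * ν₃) * (μ₁ * μ₂ + μ₁ * μ₃ + μ₂ * μ₃)
        + (μ₁ * μ₂ + μ₁ * μ₃ + μ₂ * μ₃) ^ 2)
      - 48 * (ν₁ + ν₂ + ν₃) ^ 2 * ((ν₁ * ν₂ + ν₁ * ν₃ + ν₂ * ν₃)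
        + (μ₁ * μ₂ + μ₁ * μ₃ + μ₂ * μ₃))) * hA
  · nlinarith [sq_nonneg ((μ₁ - μ₂) * (μ₁ - μ₃) * (μ₂ - μ₃))]
  · rw [hA]
    nlinarith [sq_nonneg ((ν₁ - ν₂) * (ν₁ - ν₃) * (ν₂ - ν₃))]
end

section
/- Let (μ₁, μ₂, μ₃) be an admissible triple of real numbers with P₂ < 0 (negative scalar curvature case). Then C = P₁P₃ < 0 and P₁ = (B − √(B² + 4AC))/(2A), where A = P₂, B = P₁P₂ − P₃ and C = P₁P₃. -/
/-- negative scalar curvature case. For an admissible triple with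
P₂ < 0, one has C < 0 and P₁ = (B − √(B² + 4AC))/(2A). -/
theorem stmt_3 (μ₁ μ₂ μ₃ : ℝ)
    (h₁ : μ₁ + μ₂ > 0) (h₂ : μ₁ + μ₃ > 0) (h₃ : μ₂ + μ₃ > 0)
    (hP2 : P2 μ₁ μ₂ μ₃ < 0) :
    qC μ₁ μ₂ μ₃ < 0 ∧
      P1 μ₁ μ₂ μ₃ =
        (qB μ₁ μ₂ μ₃ -
            Real.sqrt ((qB μ₁ μ₂ μ₃) ^ 2 + 4 * qA μ₁ μ₂ μ₃ * qC μ₁ μ₂ μ₃)) /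
          (2 * qA μ₁ μ₂ μ₃) := by
  simp only [qA, qB, qC, P1, P2, P3] at *
  have hP1 : μ₁ + μ₂ + μ₃ > 0 := by linarith
  have hP3 : μ₁ * μ₂ * μ₃ < 0 := by
    nlinarith [mul_pos h₁ h₂, mul_pos h₁ h₃, mul_pos h₂ h₃, sq_nonneg μ₁,
      sq_nonneg μ₂, sq_nonneg μ₃, sq_nonneg (μ₁ + μ₂ + μ₃)]
  have hC : (μ₁ + μ₂ + μ₃) * (μ₁ * μ₂ * μ₃) < 0 :=
    mul_neg_of_pos_of_neg hP1 hP3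
  refine ⟨hC, ?_⟩
  set B := (μ₁ + μ₂ + μ₃) * (μ₁ * μ₂ + μ₁ * μ₃ + μ₂ * μ₃) - μ₁ * μ₂ * μ₃ with hB
  set A := μ₁ * μ₂ + μ₁ * μ₃ + μ₂ * μ₃ with hA
  have hkey : B ^ 2 + 4 * A * ((μ₁ + μ₂ + μ₃) * (μ₁ * μ₂ * μ₃)) =
      (B - 2 * A * (μ₁ + μ₂ + μ₃)) ^ 2 := by rw [hB, hA]; ring
  have hnn : 0 ≤ B - 2 * A * (μ₁ + μ₂ + μ₃) := by
    rw [hB, hA]; nlinarith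
  rw [hkey, Real.sqrt_sq hnn]
  have hA0 : (2 : ℝ) * A ≠ 0 := by rw [hA]; intro h; nlinarith
  field_simp
  rw [eq_div_iff (by intro h; apply hA0; simp [h])]; ring
end

section
/- Let (μ₁, μ₂, μ₃) be an admissible triple of real numbers and a₀ > 0, and define a₁ = (a₀/3)·P₂ and a₂ = (a₀/360)·(36P₂² − 48P₁P₃). Then 27a₁² − 30a₀a₂ = 0 if and only if P₃ = 0 (i.e., if and only if at least one of μ₁, μ₂, μ₃ is zero, which is equivalent to the metric having degenerate Ricci tensor). -/
/-- for an admissible triple, 27a₁² − 30a₀a₂ = 0 if and only if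
P₃ = 0 (i.e. the metric has degenerate Ricci tensor). -/
theorem stmt_8 (μ₁ μ₂ μ₃ a₀ a₁ a₂ : ℝ)
    (h₁ : μ₁ + μ₂ > 0) (h₂ : μ₁ + μ₃ > 0) (h₃ : μ₂ + μ₃ > 0)
    (ha₀ : a₀ > 0)
    (ha₁ : a₁ = (a₀ / 3) * P2 μ₁ μ₂ μ₃)
    (ha₂ : a₂ = (a₀ / 360) * (36 * (P2 μ₁ μ₂ μ₃) ^ 2
      - 48 * P1 μ₁ μ₂ μ₃ * P3 μ₁ μ₂ μ₃)) :
    27 * a₁ ^ 2 - 30 * a₀ * a₂ = 0 ↔ P3 μ₁ μ₂ μ₃ = 0 := by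
  have hP1 : P1 μ₁ μ₂ μ₃ > 0 := by unfold P1; linarith
  have key : 27 * a₁ ^ 2 - 30 * a₀ * a₂ = 4 * a₀ ^ 2 * P1 μ₁ μ₂ μ₃ * P3 μ₁ μ₂ μ₃ := by
    rw [ha₁, ha₂]; ring
  rw [key]
  constructor
  · intro h
    have h4 : 4 * a₀ ^ 2 * P1 μ₁ μ₂ μ₃ ≠ 0 := by positivity
    exact (mul_eq_zero.mp h).resolve_left h4
  · intro h; rw [h]; ring
end

section
/- Let x, y, z be real numbers with P₁ ≠ 0, P₂ > 0 and P₁·P₃ = −P₂². Then P₁² ≥ (27/5)·P₂. -/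
/-- if P₁ ≠ 0, P₂ > 0 and P₁P₃ = −P₂², then P₁² ≥ (27/5)P₂,
where P₁, P₂, P₃ are the elementary symmetric polynomials in x, y, z. -/
theorem stmt_10 (x y z : ℝ)
    (h₁ : x + y + z ≠ 0)
    (h₂ : x * y + x * z + y * z > 0)
    (h₃ : (x + y + z) * (x * y * z) = -(x * y + x * z + y * z) ^ 2) :
    (x + y + z) ^ 2 ≥ (27 / 5) * (x * y + x * z + y * z) := by
  have hp : (x + y + z) ^ 2 > 0 := by positivity
  have hid : (x * y + x * z + y * z) ^ 2 *
      (5 * (x + y + z) ^ 4 - 22 * (x * y + x * z + y * z) * (x + y + z) ^ 2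
        - 27 * (x * y + x * z + y * z) ^ 2)
      = ((x - y) * (y - z) * (x - z)) ^ 2 * (x + y + z) ^ 2 := by
    linear_combination (4 * (x + y + z) ^ 4 - 18 * (x + y + z) ^ 2 * (x * y + x * z + y * z)
      + 27 * (x + y + z) * (x * y * z) - 27 * (x * y + x * z + y * z) ^ 2) * h₃
  have key : 5 * (x + y + z) ^ 4 - 22 * (x * y + x * z + y * z) * (x + y + z) ^ 2
      - 27 * (x * y + x * z + y * z) ^ 2 ≥ 0 := by
    have h4 : ((x - y) * (y - z) * (x - z)) ^ 2 * (x + y + z) ^ 2 ≥ 0 := by positivity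
    nlinarith [hid, h4, mul_pos h₂ h₂]
  nlinarith [key, hp, h₂, sq_nonneg ((x + y + z) ^ 2 + (x * y + x * z + y * z))]
end

section
/- Let n and n' be positive integers and let μ₂, μ₃, μ₂', μ₃' be positive real numbers. Write P₁ = μ₂ + μ₃, P₂ = μ₂μ₃, and define a₀ = 16π²/(n·P₁·P₂), a₁ = (a₀/3)·P₂, a₂ = (a₀/10)·P₂², a₃ = (a₀/5040)·(184P₂³ − 48P₁²P₂²), and analogously a₀', a₁', a₂', a₃' from n', μ₂', μ₃'. If aⱼ = aⱼ' for j = 0, 1, 2, 3, then n = n' and the multisets {μ₂, μ₃} and {μ₂', μ₃'} are equal. (This is the algebraic core of the lemma that isospectral locally homogeneous elliptic three-manifolds with degenerate Ricci tensor are locally isometric and have fundamental groups of the same order.) -/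
open Real

/-- algebraic core of the lemma that isospectral locally
homogeneous elliptic three-manifolds with degenerate Ricci tensor are locally
isometric and have fundamental groups of the same order.  Here the Christoffel
symbols are (0, μ₂, μ₃) with μ₂, μ₃ > 0, n = |Γ|, and a₀, a₁, a₂, a₃ are the
first four heat invariants. -/
theorem stmt_13 (n n' : ℕ) (hn : 0 < n) (hn' : 0 < n')
    (μ₂ μ₃ ν₂ ν₃ : ℝ)
    (hμ₂ : 0 < μ₂) (hμ₃ : 0 < μ₃) (hν₂ : 0 < ν₂) (hν₃ : 0 < ν₃)
    (a₀ a₁ a₂ a₃ b₀ b₁ b₂ b₃ : ℝ)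
    (ha₀ : a₀ = 16 * π ^ 2 / ((n : ℝ) * (μ₂ + μ₃) * (μ₂ * μ₃)))
    (ha₁ : a₁ = (a₀ / 3) * (μ₂ * μ₃))
    (ha₂ : a₂ = (a₀ / 10) * (μ₂ * μ₃) ^ 2)
    (ha₃ : a₃ = (a₀ / 5040) * (184 * (μ₂ * μ₃) ^ 3
      - 48 * (μ₂ + μ₃) ^ 2 * (μ₂ * μ₃) ^ 2))
    (hb₀ : b₀ = 16 * π ^ 2 / ((n' : ℝ) * (ν₂ + ν₃) * (ν₂ * ν₃)))
    (hb₁ : b₁ = (b₀ / 3) * (ν₂ * ν₃))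
    (hb₂ : b₂ = (b₀ / 10) * (ν₂ * ν₃) ^ 2)
    (hb₃ : b₃ = (b₀ / 5040) * (184 * (ν₂ * ν₃) ^ 3
      - 48 * (ν₂ + ν₃) ^ 2 * (ν₂ * ν₃) ^ 2))
    (e₀ : a₀ = b₀) (e₁ : a₁ = b₁) (e₂ : a₂ = b₂) (e₃ : a₃ = b₃) :
    n = n' ∧ ({μ₂, μ₃} : Multiset ℝ) = {ν₂, ν₃} := by
  have hπ : (0:ℝ) < π := Real.pi_pos
  have hden : (0:ℝ) < (n : ℝ) * (μ₂ + μ₃) * (μ₂ * μ₃) := by positivity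
  have ha0pos : 0 < a₀ := by rw [ha₀]; positivity
  have ha0ne : a₀ ≠ 0 := ne_of_gt ha0pos
  -- product equality
  have hP : μ₂ * μ₃ = ν₂ * ν₃ := by
    have := e₁
    rw [ha₁, hb₁, ← e₀] at this
    field_simp at this
    exact this
  -- sum equality
  have hS : μ₂ + μ₃ = ν₂ + ν₃ := by
    have h3 := e₃
    rw [ha₃, hb₃, ← e₀, ← hP] at h3
    have hPne : μ₂ * μ₃ ≠ 0 := by positivity
    field_simp at h3
    have hsq : (μ₂ + μ₃) ^ 2 = (ν₂ + ν₃) ^ 2 := by linarith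
    exact (pow_left_inj₀ (by positivity) (by positivity) two_ne_zero).mp hsq
  -- n = n'
  have hnn : n = n' := by
    have h0 := e₀
    rw [ha₀, hb₀, ← hS, ← hP] at h0
    field_simp at h0
    exact_mod_cast h0.symm
  refine ⟨hnn, ?_⟩
  -- roots of same quadratic
  have key : (μ₂ - ν₂) * (μ₂ - ν₃) = 0 := by linear_combination μ₂ * hS - hP
  rcases mul_eq_zero.mp key with h | h
  · have h2 : μ₂ = ν₂ := by linarith
    have h3 : μ₃ = ν₃ := by linarith [hS]
    rw [h2, h3]
  · have h2 : μ₂ = ν₃ := by linarith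
    have h3 : μ₃ = ν₂ := by linarith [hS]
    rw [h2, h3]
    exact Multiset.cons_swap _ _ _
end
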